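/- Let Z be standard Gaussian, θ > 0, x ∈ ℝ, and B_n(x) = {Z ≥ √θ(b_n + x/a_n)} with a_n, b_n the Gaussian extreme-value constants. Then conditional on B_n(x), the random variable a_n(Z/√θ − b_n − x/a_n) converges in distribution to an exponential random variable with rate θ. -/

import Mathlib

open MeasureTheory ProbabilityTheory Real Filter Topology

/-- The scaling constant `a_n = √(2 log n)`. -/
noncomputable def aConst (n : ℕ) : ℝ := Real.sqrt (2 * Real.log n)

/-- The centering constant `b_n = √(2 log n) − log(4π log n)/(2√(2 log n))`. -/
noncomputable def bConst (n : ℕ) : ℝ :=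
  Real.sqrt (2 * Real.log n)
    - Real.log (4 * Real.pi * Real.log n) / (2 * Real.sqrt (2 * Real.log n))


noncomputable def gaussTail (s : ℝ) : ℝ := ∫ u in Set.Ioi s, Real.exp (-(u^2/2))

lemma integrableOn_exp_tail (s : ℝ) :
    IntegrableOn (fun u : ℝ => rexp (-(u^2/2))) (Set.Ioi s) := by
  have h : (fun u : ℝ => rexp (-(u^2/2))) = fun u : ℝ => rexp (-(1/2) * u^2) := by
    funext u; ring_nf
  rw [h]
  exact (integrable_exp_neg_mul_sq (by norm_num)).integrableOn

lemma integrableOn_aux (s : ℝ) (hs : 0 < s) :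
    IntegrableOn (fun u : ℝ => (1+(u^2)⁻¹) * rexp (-(u^2/2))) (Set.Ioi s) := by
  refine Integrable.mono' ((integrableOn_exp_tail s).const_mul (1+(s^2)⁻¹)) ?_ ?_
  · apply Measurable.aestronglyMeasurable
    fun_prop
  · filter_upwards [ae_restrict_mem measurableSet_Ioi] with u hu
    have hu0 : 0 < u := hs.trans hu
    have h2 : s^2 ≤ u^2 := by nlinarith [le_of_lt (show s < u from hu)]
    have h1 : (u^2)⁻¹ ≤ (s^2)⁻¹ := by
      apply inv_anti₀ (by positivity) h2
    rw [Real.norm_eq_abs, abs_of_nonneg (by positivity)]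
    have hE := (Real.exp_pos (-(u^2/2))).le
    nlinarith

lemma aux_integral (s : ℝ) (hs : 0 < s) :
    ∫ u in Set.Ioi s, (1+(u^2)⁻¹) * rexp (-(u^2/2)) = s⁻¹ * rexp (-(s^2/2)) := by
  have h := integral_Ioi_of_hasDerivAt_of_tendsto'
    (f := fun u : ℝ => -(u⁻¹ * rexp (-(u^2/2))))
    (f' := fun u : ℝ => (1+(u^2)⁻¹) * rexp (-(u^2/2))) (a := s) (m := 0) ?_ (integrableOn_aux s hs) ?_
  · rw [h]; ring
  · intro u hu
    have hu0 : 0 < u := lt_of_lt_of_le hs hu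
    have h1 : HasDerivAt (fun y : ℝ => -(y^2/2)) (-u) u := by
      simpa using ((hasDerivAt_pow 2 u).div_const 2).fun_neg
    have h2 := ((hasDerivAt_inv hu0.ne').fun_mul h1.exp).fun_neg
    convert h2 using 1
    field_simp
    ring
  · have h1 : Tendsto (fun u : ℝ => u⁻¹) atTop (𝓝 0) := tendsto_inv_atTop_zero
    have h2 : Tendsto (fun u : ℝ => rexp (-(u^2/2))) atTop (𝓝 0) := by
      apply Real.tendsto_exp_atBot.comp
      apply tendsto_neg_atTop_atBot.comp
      exact (tendsto_pow_atTop two_ne_zero).atTop_div_const (by norm_num)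
    simpa using (h1.mul h2).neg

lemma tail_le (s : ℝ) (hs : 0 < s) : gaussTail s ≤ s⁻¹ * rexp (-(s^2/2)) := by
  rw [← aux_integral s hs]
  apply setIntegral_mono_on (integrableOn_exp_tail s) (integrableOn_aux s hs) measurableSet_Ioi
  intro u _
  nlinarith [Real.exp_pos (-(u^2/2)), inv_nonneg.mpr (sq_nonneg u)]

lemma le_tail (s : ℝ) (hs : 0 < s) : s/(s^2+1) * rexp (-(s^2/2)) ≤ gaussTail s := by
  have h : s/(s^2+1) * rexp (-(s^2/2))
      = ∫ u in Set.Ioi s, s^2/(s^2+1) * ((1+(u^2)⁻¹) * rexp (-(u^2/2))) := by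
    rw [MeasureTheory.integral_const_mul, aux_integral s hs]
    field_simp
  rw [h]
  apply setIntegral_mono_on ((integrableOn_aux s hs).const_mul _) (integrableOn_exp_tail s)
    measurableSet_Ioi
  intro u hu
  have hu0 : 0 < u := hs.trans hu
  have hE := (Real.exp_pos (-(u^2/2))).le
  have h2 : s^2 * (u^2)⁻¹ ≤ 1 := by
    rw [← div_eq_mul_inv, div_le_one (by positivity)]
    nlinarith [le_of_lt (show s < u from hu)]
  have h3 : s^2/(s^2+1) * (1+(u^2)⁻¹) ≤ 1 := by
    rw [div_mul_eq_mul_div, div_le_one (by positivity)]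
    nlinarith
  calc s^2/(s^2+1) * ((1+(u^2)⁻¹) * rexp (-(u^2/2)))
      = (s^2/(s^2+1) * (1+(u^2)⁻¹)) * rexp (-(u^2/2)) := by ring
    _ ≤ 1 * rexp (-(u^2/2)) := mul_le_mul_of_nonneg_right h3 hE
    _ = rexp (-(u^2/2)) := one_mul _

lemma tail_pos (s : ℝ) (hs : 0 < s) : 0 < gaussTail s :=
  lt_of_lt_of_le (by apply mul_pos (div_pos hs (by positivity)) (Real.exp_pos _)) (le_tail s hs)

lemma tail_nonneg (s : ℝ) : 0 ≤ gaussTail s :=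
  integral_nonneg fun u => (Real.exp_pos _).le

lemma tail_ratio_tendsto (θ t : ℝ) (c₀ c₁ : ℕ → ℝ)
    (h₀ : Tendsto c₀ atTop atTop)
    (hdiff : Tendsto (fun n => c₁ n - c₀ n) atTop (𝓝 0))
    (hD : Tendsto (fun n => c₁ n^2 - c₀ n^2) atTop (𝓝 (2*θ*t))) :
    Tendsto (fun n => gaussTail (c₁ n) / gaussTail (c₀ n)) atTop (𝓝 (Real.exp (-θ*t))) := by
  have h₁ : Tendsto c₁ atTop atTop := by
    have h := tendsto_atTop_add_right_of_le' atTop (-1 : ℝ) h₀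
      (hdiff.eventually (eventually_ge_nhds (by norm_num : (-1:ℝ) < 0)))
    simpa using h
  have hinv₀ : Tendsto (fun n => (c₀ n)⁻¹) atTop (𝓝 0) := h₀.inv_tendsto_atTop
  have hinv₁ : Tendsto (fun n => (c₁ n)⁻¹) atTop (𝓝 0) := h₁.inv_tendsto_atTop
  have hratio : Tendsto (fun n => c₀ n / c₁ n) atTop (𝓝 1) := by
    have h : Tendsto (fun n => 1 - (c₁ n - c₀ n) * (c₁ n)⁻¹) atTop (𝓝 (1 - 0*0)) :=
      tendsto_const_nhds.sub (hdiff.mul hinv₁)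
    rw [mul_zero, sub_zero] at h
    apply Filter.Tendsto.congr' _ h
    filter_upwards [h₁.eventually_gt_atTop 0] with n h1
    field_simp
    ring
  have hexp : Tendsto (fun n => rexp (-(c₁ n^2 - c₀ n^2)/2)) atTop (𝓝 (rexp (-θ*t))) := by
    have h1 := (hD.neg.div_const 2)
    have h2 := (Real.continuous_exp.tendsto _).comp h1
    convert h2 using 2
    · rfl
    · congr 1; ring
  have hc1sqinv : Tendsto (fun n => (c₁ n^2)⁻¹) atTop (𝓝 0) := by
    have := hinv₁.mul hinv₁
    rw [mul_zero] at this
    apply Filter.Tendsto.congr' _ this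
    filter_upwards with n
    rw [sq, mul_inv]
  have hlowc : Tendsto (fun n => c₀ n * c₁ n / (c₁ n^2 + 1)) atTop (𝓝 1) := by
    have hden : Tendsto (fun n => 1 + (c₁ n^2)⁻¹) atTop (𝓝 (1+0)) :=
      tendsto_const_nhds.add hc1sqinv
    rw [add_zero] at hden
    have h := hratio.div hden one_ne_zero
    rw [div_one] at h
    apply Filter.Tendsto.congr' _ h
    filter_upwards [h₁.eventually_gt_atTop 0] with n h1
    show c₀ n / c₁ n / (1 + (c₁ n^2)⁻¹) = c₀ n * c₁ n / (c₁ n^2 + 1)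
    field_simp
  have hupc : Tendsto (fun n => (c₀ n^2 + 1) / (c₀ n * c₁ n)) atTop (𝓝 1) := by
    have h : Tendsto (fun n => c₀ n / c₁ n + (c₀ n)⁻¹ * (c₁ n)⁻¹) atTop (𝓝 (1 + 0*0)) :=
      hratio.add (hinv₀.mul hinv₁)
    rw [mul_zero, add_zero] at h
    apply Filter.Tendsto.congr' _ h
    filter_upwards [h₀.eventually_gt_atTop 0, h₁.eventually_gt_atTop 0] with n h0 h1
    field_simp
  have hlow : Tendsto (fun n => (c₀ n * c₁ n / (c₁ n^2 + 1)) * rexp (-(c₁ n^2 - c₀ n^2)/2))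
      atTop (𝓝 (rexp (-θ*t))) := by
    have := hlowc.mul hexp
    rwa [one_mul] at this
  have hup : Tendsto (fun n => ((c₀ n^2 + 1) / (c₀ n * c₁ n)) * rexp (-(c₁ n^2 - c₀ n^2)/2))
      atTop (𝓝 (rexp (-θ*t))) := by
    have := hupc.mul hexp
    rwa [one_mul] at this
  refine tendsto_of_tendsto_of_tendsto_of_le_of_le' hlow hup ?_ ?_
  · filter_upwards [h₀.eventually_gt_atTop 0, h₁.eventually_gt_atTop 0] with n h0 h1
    have hF0pos : 0 < gaussTail (c₀ n) := tail_pos _ h0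
    have key : (c₀ n * c₁ n / (c₁ n^2 + 1)) * rexp (-(c₁ n^2 - c₀ n^2)/2)
        = (c₁ n/(c₁ n^2+1) * rexp (-(c₁ n^2/2))) / ((c₀ n)⁻¹ * rexp (-(c₀ n^2/2))) := by
      rw [show -(c₁ n^2 - c₀ n^2)/2 = -(c₁ n^2/2) - -(c₀ n^2/2) by ring, Real.exp_sub]
      field_simp
    rw [key]
    exact div_le_div₀ (tail_nonneg _) (le_tail _ h1) (by positivity) (tail_le _ h0)
  · filter_upwards [h₀.eventually_gt_atTop 0, h₁.eventually_gt_atTop 0] with n h0 h1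
    have key : ((c₀ n^2 + 1) / (c₀ n * c₁ n)) * rexp (-(c₁ n^2 - c₀ n^2)/2)
        = ((c₁ n)⁻¹ * rexp (-(c₁ n^2/2))) / (c₀ n/(c₀ n^2+1) * rexp (-(c₀ n^2/2))) := by
      rw [show -(c₁ n^2 - c₀ n^2)/2 = -(c₁ n^2/2) - -(c₀ n^2/2) by ring, Real.exp_sub]
      field_simp
    rw [key]
    exact div_le_div₀ (by positivity) (tail_le _ h1) (by positivity) (le_tail _ h0)

lemma sqrt_tendsto_atTop : Tendsto Real.sqrt atTop atTop := by
  apply tendsto_atTop_atTop_of_monotone (fun a b h => Real.sqrt_le_sqrt h)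
  intro b
  exact ⟨b^2, by rw [Real.sqrt_sq_eq_abs]; exact le_abs_self b⟩

lemma cond_congr_ae {Ω : Type*} [MeasurableSpace Ω] (P : Measure Ω) {Z g : Ω → ℝ}
    (hg : Z =ᵐ[P] g) (c d : ℝ) :
    P[|{ω | c ≤ Z ω}] {ω | d ≤ Z ω} = P[|{ω | c ≤ g ω}] {ω | d ≤ g ω} := by
  have hB : {ω | c ≤ Z ω} =ᵐ[P] {ω | c ≤ g ω} := by
    rw [Filter.eventuallyEq_set]
    filter_upwards [hg] with ω h
    simp [Set.mem_setOf_eq, h]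
  have hA : {ω | d ≤ Z ω} =ᵐ[P] {ω | d ≤ g ω} := by
    rw [Filter.eventuallyEq_set]
    filter_upwards [hg] with ω h
    simp [Set.mem_setOf_eq, h]
  unfold ProbabilityTheory.cond
  rw [measure_congr hB, Measure.restrict_congr_set hB]
  simp only [Measure.smul_apply, smul_eq_mul]
  congr 1
  exact measure_congr (hA.filter_mono (MeasureTheory.ae_mono Measure.restrict_le_self))

lemma gaussianReal_Ici (r : ℝ) :
    gaussianReal 0 1 (Set.Ici r)
      = ENNReal.ofReal ((Real.sqrt (2*π))⁻¹ * gaussTail r) := by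
  rw [gaussianReal_apply_eq_integral 0 one_ne_zero]
  congr 1
  have h : ∀ u : ℝ, gaussianPDFReal 0 1 u = (Real.sqrt (2*π))⁻¹ * rexp (-(u^2/2)) := by
    intro u
    simp [gaussianPDFReal, neg_div]
  rw [MeasureTheory.integral_congr_ae (Filter.Eventually.of_forall h) ]
  rw [MeasureTheory.integral_const_mul, gaussTail, MeasureTheory.integral_Ici_eq_integral_Ioi]

/-- For a standard Gaussian `Z`, `θ > 0`, `x ∈ ℝ` and
`B_n(x) = {Z ≥ √θ(b_n + x/a_n)}`, conditionally on `B_n(x)` the random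
variable `a_n(Z/√θ − b_n − x/a_n)` converges in distribution to an `Exp(θ)`
random variable (equivalently, its conditional upper tail at each `t ≥ 0`
converges to `e^{−θt}`, and its CDF converges at every point). -/
theorem gaussian_conditional_exp_limit
    {Ω : Type*} [MeasurableSpace Ω] (P : Measure Ω) [IsProbabilityMeasure P]
    (Z : Ω → ℝ) (hZ : Measure.map Z P = gaussianReal 0 1)
    (θ : ℝ) (hθ : 0 < θ) (x : ℝ) :
    ∀ t : ℝ, 0 ≤ t →
      Tendsto
        (fun n : ℕ =>
          ((P[|{ω | Real.sqrt θ * (bConst n + x / aConst n) ≤ Z ω}])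
            {ω | t ≤ aConst n * (Z ω / Real.sqrt θ - bConst n - x / aConst n)}).toReal)
        atTop (𝓝 (Real.exp (-θ * t))) := by
  intro t ht
  have hsθ : 0 < Real.sqrt θ := Real.sqrt_pos.mpr hθ
  set s : ℝ := Real.sqrt θ with hs_def
  set c₀ : ℕ → ℝ := fun n => s * (bConst n + x / aConst n) with hc₀
  set c₁ : ℕ → ℝ := fun n => s * (bConst n + (x+t) / aConst n) with hc₁
  -- measurability
  have hZm : AEMeasurable Z P := by
    by_contra h
    rw [Measure.map_of_not_aemeasurable h] at hZ
    exact (IsProbabilityMeasure.ne_zero (gaussianReal 0 1)) hZ.symm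
  set g := hZm.mk Z with hg_def
  have hgm : Measurable g := hZm.measurable_mk
  have hZg : Z =ᵐ[P] g := hZm.ae_eq_mk
  have hmap : P.map g = gaussianReal 0 1 := by rw [← Measure.map_congr hZg]; exact hZ
  -- limits
  have hL : Tendsto (fun n : ℕ => Real.log n) atTop atTop :=
    Real.tendsto_log_atTop.comp tendsto_natCast_atTop_atTop
  have ha_top : Tendsto aConst atTop atTop := by
    have : aConst = fun n : ℕ => Real.sqrt (2 * Real.log n) := rfl
    rw [this]
    exact sqrt_tendsto_atTop.comp (hL.const_mul_atTop two_pos)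
  have hlog_div : Tendsto (fun y : ℝ => Real.log (4*π*y) / (4*y)) atTop (𝓝 0) := by
    have h1 : Tendsto (fun z : ℝ => Real.log z / z) atTop (𝓝 0) :=
      Real.isLittleO_log_id_atTop.tendsto_div_nhds_zero
    have h2 : Tendsto (fun y : ℝ => 4*π*y) atTop atTop :=
      Tendsto.const_mul_atTop (by positivity) tendsto_id
    have h3 : Tendsto (fun y : ℝ => (Real.log (4*π*y) / (4*π*y)) * π) atTop (𝓝 (0*π)) :=
      Tendsto.mul_const π (h1.comp h2)
    rw [zero_mul] at h3
    apply Filter.Tendsto.congr' _ h3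
    filter_upwards [eventually_gt_atTop 0] with y hy
    field_simp
  have hba : Tendsto (fun n => bConst n / aConst n) atTop (𝓝 1) := by
    have h1 : Tendsto (fun n : ℕ => 1 - Real.log (4*π*Real.log n) / (4*Real.log n)) atTop
        (𝓝 (1-0)) := tendsto_const_nhds.sub (hlog_div.comp hL)
    rw [sub_zero] at h1
    apply Filter.Tendsto.congr' _ h1
    filter_upwards [hL.eventually_gt_atTop 0] with n hn
    have ha : 0 < aConst n := Real.sqrt_pos.mpr (by positivity)
    have ha2 : aConst n^2 = 2*Real.log n := Real.sq_sqrt (by positivity)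
    have hb : bConst n = aConst n - Real.log (4*π*Real.log n)/(2*aConst n) := rfl
    have h4 : 2 * aConst n * aConst n = 4 * Real.log n := by nlinarith [ha2]
    rw [hb, sub_div, div_self ha.ne', div_div, h4]
  have hainv : Tendsto (fun n => (aConst n)⁻¹) atTop (𝓝 0) := ha_top.inv_tendsto_atTop
  have ha2inv : Tendsto (fun n => (aConst n^2)⁻¹) atTop (𝓝 0) := by
    have h := hainv.mul hainv
    rw [mul_zero] at h
    apply Filter.Tendsto.congr' _ h
    filter_upwards with n
    rw [sq, mul_inv]
  -- c₀ → ∞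
  have h₀ : Tendsto c₀ atTop atTop := by
    have hfac : Tendsto (fun n => s * (bConst n / aConst n) + s * x * (aConst n^2)⁻¹) atTop
        (𝓝 (s * 1 + s * x * 0)) := (hba.const_mul s).add (ha2inv.const_mul (s*x))
    rw [mul_one, mul_zero, add_zero] at hfac
    have hprod := ha_top.atTop_mul_pos hsθ hfac
    apply Filter.Tendsto.congr' _ hprod
    filter_upwards [ha_top.eventually_gt_atTop 0] with n ha
    simp only [hc₀]
    field_simp
  have hdiff : Tendsto (fun n => c₁ n - c₀ n) atTop (𝓝 0) := by
    have h := hainv.const_mul (s*t)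
    rw [mul_zero] at h
    apply Filter.Tendsto.congr' _ h
    filter_upwards with n
    simp only [hc₁, hc₀]
    rw [← mul_sub, add_sub_add_left_eq_sub, div_sub_div_same, add_sub_cancel_left,
      div_eq_mul_inv]
    ring
  have hD : Tendsto (fun n => c₁ n^2 - c₀ n^2) atTop (𝓝 (2*θ*t)) := by
    have hlim : Tendsto
        (fun n => 2*θ*t*(bConst n/aConst n) + θ*t*(2*x+t)*(aConst n^2)⁻¹) atTop
        (𝓝 (2*θ*t*1 + θ*t*(2*x+t)*0)) := (hba.const_mul _).add (ha2inv.const_mul _)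
    rw [mul_one, mul_zero, add_zero] at hlim
    apply Filter.Tendsto.congr' _ hlim
    filter_upwards [ha_top.eventually_gt_atTop 0] with n ha
    have hsq : s^2 = θ := Real.sq_sqrt hθ.le
    simp only [hc₁, hc₀, mul_pow, hsq]
    field_simp
    ring
  have hratio := tail_ratio_tendsto θ t c₀ c₁ h₀ hdiff hD
  apply Filter.Tendsto.congr' _ hratio
  filter_upwards [ha_top.eventually_gt_atTop 0, h₀.eventually_gt_atTop 0] with n ha h0
  -- per-n computation
  have hc01 : c₀ n ≤ c₁ n := by
    apply mul_le_mul_of_nonneg_left _ (Real.sqrt_nonneg θ)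
    apply add_le_add_right
    exact (div_le_div_iff_of_pos_right ha).mpr (by linarith)
  have h1pos : 0 < c₁ n := lt_of_lt_of_le h0 hc01
  have hAset : {ω | t ≤ aConst n * (Z ω / s - bConst n - x / aConst n)}
      = {ω | c₁ n ≤ Z ω} := by
    ext ω
    simp only [Set.mem_setOf_eq]
    rw [← sub_nonneg, ← sub_nonneg (a := Z ω)]
    have hid : aConst n * (Z ω / s - bConst n - x / aConst n) - t
        = (aConst n / s) * (Z ω - c₁ n) := by
      simp only [hc₁]
      field_simp
      ring
    rw [hid]
    exact mul_nonneg_iff_of_pos_left (div_pos ha hsθ)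
  rw [hAset]
  have hBset : {ω | s * (bConst n + x / aConst n) ≤ Z ω} = {ω | c₀ n ≤ Z ω} := rfl
  rw [hBset, cond_congr_ae P hZg (c₀ n) (c₁ n)]
  have hBm : MeasurableSet {ω | c₀ n ≤ g ω} := hgm measurableSet_Ici
  rw [ProbabilityTheory.cond_apply hBm]
  have hsub : {ω | c₁ n ≤ g ω} ⊆ {ω | c₀ n ≤ g ω} := fun ω h => le_trans hc01 h
  rw [Set.inter_eq_self_of_subset_right hsub]
  have hmeas : ∀ r : ℝ, P {ω | r ≤ g ω}
      = ENNReal.ofReal ((Real.sqrt (2*π))⁻¹ * gaussTail r) := by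
    intro r
    have h : P {ω | r ≤ g ω} = (P.map g) (Set.Ici r) := by
      rw [Measure.map_apply hgm measurableSet_Ici]
      rfl
    rw [h, hmap, gaussianReal_Ici r]
  rw [hmeas, hmeas]
  have hK : (0:ℝ) < (Real.sqrt (2*π))⁻¹ := by positivity
  have hF0 : 0 < gaussTail (c₀ n) := tail_pos _ h0
  have hF1 : 0 ≤ gaussTail (c₁ n) := tail_nonneg _
  rw [ENNReal.toReal_mul, ENNReal.toReal_inv, ENNReal.toReal_ofReal (by positivity),
    ENNReal.toReal_ofReal (by positivity)]
  field_simp
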